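/- Every d-regular finite simple graph G with at least one edge has sum index S(G) ≥ 2d − 1. -/

import Mathlib

open SimpleGraph

/-- The sum index of a finite simple graph. -/
noncomputable def sumIndex {V : Type*} [Fintype V] (G : SimpleGraph V) : ℕ :=
  sInf {n | ∃ f : V → ℤ, Function.Injective f ∧
    {s : ℤ | ∃ u v, G.Adj u v ∧ s = f u + f v}.ncard = n}

/-- Every `d`-regular graph with at least one edge has sum index at
least `2d - 1`. -/
theorem stmt7 {V : Type*} [Fintype V] (G : SimpleGraph V) [DecidableRel G.Adj]
    (d : ℕ) (hreg : G.IsRegularOfDegree d) (hedge : ∃ u v, G.Adj u v) :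
    2 * d - 1 ≤ sumIndex G := by
  classical
  obtain ⟨u0, v0, h00⟩ := hedge
  have hd1 : 1 ≤ d := by
    have h1 : v0 ∈ G.neighborFinset u0 := (mem_neighborFinset G u0 v0).mpr h00
    have h2 := hreg u0
    rw [← h2]
    exact Finset.card_pos.mpr ⟨v0, h1⟩
  apply le_csInf
  · refine ⟨_, fun v => ((Fintype.equivFin V v : ℕ) : ℤ), ?_, rfl⟩
    intro x y hxy
    have : (Fintype.equivFin V x : ℕ) = (Fintype.equivFin V y : ℕ) := by simpa using hxy
    exact (Fintype.equivFin V).injective (Fin.ext this)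
  rintro n ⟨f, hf, rfl⟩
  set Sfin : Finset ℤ := (Finset.univ.filter fun e : V × V => G.Adj e.1 e.2).image
      (fun e => f e.1 + f e.2) with hSfin
  have hset : {s : ℤ | ∃ u v, G.Adj u v ∧ s = f u + f v} = ↑Sfin := by
    ext s
    simp only [Set.mem_setOf_eq, hSfin, Finset.coe_image, Set.mem_image, Finset.mem_coe,
      Finset.mem_filter, Finset.mem_univ, true_and]
    constructor
    · rintro ⟨u, v, huv, rfl⟩; exact ⟨(u, v), huv, rfl⟩
    · rintro ⟨⟨u, v⟩, huv, rfl⟩; exact ⟨u, v, huv, rfl⟩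
  rw [hset, Set.ncard_coe_finset]
  obtain ⟨a, -, ha⟩ := Finset.exists_min_image Finset.univ f ⟨u0, Finset.mem_univ u0⟩
  obtain ⟨b, -, hb⟩ := Finset.exists_max_image Finset.univ f ⟨u0, Finset.mem_univ u0⟩
  set A := (G.neighborFinset a).image (fun x => f a + f x) with hA
  set B := (G.neighborFinset b).image (fun x => f b + f x) with hB
  have hinj : ∀ c : ℤ, Function.Injective (fun x => c + f x) := by
    intro c x y hxy
    exact hf (by simpa using hxy)
  have hAcard : A.card = d := by
    rw [hA, Finset.card_image_of_injective _ (hinj (f a))]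
    exact hreg a
  have hBcard : B.card = d := by
    rw [hB, Finset.card_image_of_injective _ (hinj (f b))]
    exact hreg b
  have hAS : A ⊆ Sfin := by
    intro s hs
    simp only [hA, Finset.mem_image, mem_neighborFinset] at hs
    obtain ⟨x, hx, rfl⟩ := hs
    simp only [hSfin, Finset.mem_image, Finset.mem_filter, Finset.mem_univ, true_and]
    exact ⟨(a, x), hx, rfl⟩
  have hBS : B ⊆ Sfin := by
    intro s hs
    simp only [hB, Finset.mem_image, mem_neighborFinset] at hs
    obtain ⟨x, hx, rfl⟩ := hs
    simp only [hSfin, Finset.mem_image, Finset.mem_filter, Finset.mem_univ, true_and]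
    exact ⟨(b, x), hx, rfl⟩
  have hcap : (A ∩ B).card ≤ 1 := by
    have hsub : A ∩ B ⊆ {f a + f b} := by
      intro s hs
      rw [Finset.mem_inter] at hs
      obtain ⟨hsA, hsB⟩ := hs
      simp only [hA, Finset.mem_image, mem_neighborFinset] at hsA
      simp only [hB, Finset.mem_image, mem_neighborFinset] at hsB
      obtain ⟨x, hx, hsx⟩ := hsA
      obtain ⟨y, hy, hsy⟩ := hsB
      have h1 : s ≤ f a + f b := by
        rw [← hsx]; exact add_le_add_right (hb x (Finset.mem_univ x)) _
      have h2 : f a + f b ≤ s := by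
        rw [← hsy]
        have := ha y (Finset.mem_univ y)
        omega
      simp only [Finset.mem_singleton]
      omega
    exact le_trans (Finset.card_le_card hsub) (by simp)
  have hunion : (A ∪ B).card ≤ Sfin.card :=
    Finset.card_le_card (Finset.union_subset hAS hBS)
  have hkey := Finset.card_union_add_card_inter A B
  omega
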